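/- Let T ∈ B(H), c > 0, and let E be the spectral projection of |T| associated with the interval [0, c]. Let A ∈ B(H) with ‖A‖ < c, and let F be an orthogonal projection with ‖(T + A)F‖ < c − ‖A‖. Then F ∧ (I − E) = 0; consequently F is Murray–von Neumann subequivalent to E. -/

import Mathlib

open Polynomial in
lemma commute_aeval {A : Type*} [Ring A] [Algebra ℝ A] (a b : A) (hab : Commute b a)
    (p : ℝ[X]) : Commute b (aeval a p) := by
  induction p using Polynomial.induction_on with
  | C r => simpa using (Algebra.commute_algebraMap_right r b)
  | add p q hp hq => simpa [map_add] using hp.add_right hq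
  | monomial n r hp => simpa [map_mul, map_pow, mul_assoc] using
      ((Algebra.commute_algebraMap_right r b).mul_right (hab.pow_right (n+1)))

lemma commute_cfc' {H : Type*} [NormedAddCommGroup H] [InnerProductSpace ℂ H]
    [CompleteSpace H] (a b : H →L[ℂ] H) (f : ℝ → ℝ) (hab : Commute b a) :
    Commute b (cfc f a) := by
  by_cases ha : IsSelfAdjoint a
  · by_cases hf : ContinuousOn f (spectrum ℝ a)
    · rw [cfc_apply f a ha hf]
      suffices key : ∀ g : C(spectrum ℝ a, ℝ), Commute b (cfcHom ha g) from key _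
      intro g
      have hclosed : IsClosed {x : H →L[ℂ] H | Commute b x} := by
        have : {x : H →L[ℂ] H | Commute b x} = {x | b * x - x * b = 0} := by
          ext x; simp [Commute, SemiconjBy, sub_eq_zero]
        rw [this]
        exact isClosed_eq (by fun_prop) continuous_const
      have hU : IsClosed (cfcHom ha (R := ℝ) ⁻¹' {x : H →L[ℂ] H | Commute b x}) :=
        hclosed.preimage (cfcHom_continuous ha)
      have hpoly : (polynomialFunctions (spectrum ℝ a) : Set C(spectrum ℝ a, ℝ)) ⊆
          cfcHom ha (R := ℝ) ⁻¹' {x : H →L[ℂ] H | Commute b x} := by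
        intro g hg
        rw [polynomialFunctions_coe] at hg
        obtain ⟨p, rfl⟩ := hg
        have h1 : cfcHom ha (R := ℝ) (p.toContinuousMapOn (spectrum ℝ a))
            = Polynomial.aeval a p := by
          rw [← cfc_polynomial p a ha, cfc_apply _ a ha (by fun_prop)]
          congr
        simp only [Set.mem_preimage, Set.mem_setOf_eq, Polynomial.toContinuousMapOnAlgHom_apply, h1]
        exact commute_aeval a b hab p
      have hdense := polynomialFunctions.topologicalClosure (spectrum ℝ a)
      have hg : g ∈ closure (polynomialFunctions (spectrum ℝ a) : Set C(spectrum ℝ a, ℝ)) := by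
        have : g ∈ (polynomialFunctions (spectrum ℝ a)).topologicalClosure := hdense ▸ trivial
        exact this
      exact (hU.closure_subset_iff.mpr hpoly) hg
    · simp [cfc_apply_of_not_continuousOn a hf, Commute.zero_right]
  · simp [cfc_apply_of_not_predicate a ha, Commute.zero_right]

open scoped InnerProductSpace in
lemma proj_inner {H : Type*} [NormedAddCommGroup H] [InnerProductSpace ℂ H]
    [CompleteSpace H] (P : H →L[ℂ] H) (hP1 : IsIdempotentElem P) (hP2 : IsSelfAdjoint P)
    (ξ : H) : ⟪P ξ, ξ⟫_ℂ = ((‖P ξ‖ : ℂ))^2 := by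
  have h1 : P (P ξ) = P ξ := by
    conv_rhs => rw [← hP1.eq]
    simp [ContinuousLinearMap.mul_apply]
  calc ⟪P ξ, ξ⟫_ℂ = ⟪P (P ξ), ξ⟫_ℂ := by rw [h1]
    _ = ⟪P ξ, P ξ⟫_ℂ := by
        have h2 := ContinuousLinearMap.adjoint_inner_right P (P ξ) ξ
        rw [hP2.adjoint_eq] at h2
        exact h2.symm
    _ = ((‖P ξ‖ : ℂ))^2 := inner_self_eq_norm_sq_to_K _

set_option maxHeartbeats 1000000 in
open scoped InnerProductSpace in
open ContinuousLinearMap in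
/-- Let `E` be the spectral projection of `|T|` for `[0, c]` (an orthogonal projection
with `‖Tξ‖ ≤ c‖ξ‖` on its range and `‖Tξ‖ ≥ c‖ξ‖` on the range of `I - E`). If
`‖A‖ < c` and `F` is an orthogonal projection with `‖(T + A)F‖ < c - ‖A‖`, then
`F ∧ (I - E) = 0`; consequently `F ≼ E` (Murray–von Neumann subequivalence). -/
theorem stmt8 {H : Type*} [NormedAddCommGroup H] [InnerProductSpace ℂ H]
    [CompleteSpace H] (T A E F : H →L[ℂ] H) (c : ℝ) (hc : 0 < c)
    (hE1 : IsIdempotentElem E) (hE2 : IsSelfAdjoint E)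
    (hEle : ∀ ξ ∈ LinearMap.range (E : H →ₗ[ℂ] H), ‖T ξ‖ ≤ c * ‖ξ‖)
    (hEge : ∀ ξ ∈ LinearMap.range ((1 - E : H →L[ℂ] H) : H →ₗ[ℂ] H), c * ‖ξ‖ ≤ ‖T ξ‖)
    (hA : ‖A‖ < c)
    (hF1 : IsIdempotentElem F) (hF2 : IsSelfAdjoint F)
    (hTAF : ‖(T + A) * F‖ < c - ‖A‖) :
    LinearMap.range (F : H →ₗ[ℂ] H) ⊓ LinearMap.range ((1 - E : H →L[ℂ] H) : H →ₗ[ℂ] H) = ⊥ ∧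
      ∃ V : H →L[ℂ] H, adjoint V * V = F ∧ IsIdempotentElem (V * adjoint V) ∧
        LinearMap.range ((V * adjoint V : H →L[ℂ] H) : H →ₗ[ℂ] H) ≤ LinearMap.range (E : H →ₗ[ℂ] H) := by
  set r : ℝ := ‖(T + A) * F‖ + ‖A‖ with hr
  have hrc : r < c := by dsimp [r]; linarith
  have hrnn : 0 ≤ r := by positivity
  have hFap : ∀ x, F (F x) = F x := fun x => by
    conv_rhs => rw [← hF1.eq]
    simp [ContinuousLinearMap.mul_apply]
  have hEap : ∀ x, E (E x) = E x := fun x => by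
    conv_rhs => rw [← hE1.eq]
    simp [ContinuousLinearMap.mul_apply]
  -- the key norm inequality
  have key : ∀ η : H, (c - r) * ‖F η‖ ≤ 2 * c * ‖E (F η)‖ := by
    intro η
    set ξ := F η with hξ
    set e := E ξ with he
    set f := ξ - e with hf
    have h1 : ‖T e‖ ≤ c * ‖e‖ := hEle e ⟨ξ, rfl⟩
    have h2 : c * ‖f‖ ≤ ‖T f‖ := hEge f ⟨ξ, by simp [hf, he, ContinuousLinearMap.sub_apply]⟩
    have h3 : ‖T ξ‖ ≤ r * ‖ξ‖ := by
      have hTe : T ξ = ((T + A) * F) ξ - A ξ := by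
        simp [ContinuousLinearMap.mul_apply, hξ, hFap, ContinuousLinearMap.add_apply]
      calc ‖T ξ‖ ≤ ‖((T + A) * F) ξ‖ + ‖A ξ‖ := by rw [hTe]; exact norm_sub_le _ _
        _ ≤ ‖(T + A) * F‖ * ‖ξ‖ + ‖A‖ * ‖ξ‖ :=
            add_le_add (le_opNorm _ _) (le_opNorm _ _)
        _ = r * ‖ξ‖ := by ring
    have h4 : ‖T f‖ ≤ ‖T ξ‖ + ‖T e‖ := by
      rw [hf, map_sub]; exact norm_sub_le _ _
    have h5 : ‖ξ‖ ≤ ‖e‖ + ‖f‖ := by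
      calc ‖ξ‖ = ‖e + f‖ := by congr 1; rw [hf]; abel
        _ ≤ ‖e‖ + ‖f‖ := norm_add_le _ _
    nlinarith [norm_nonneg f, norm_nonneg e, norm_nonneg ξ]
  -- Part 1
  have part1 : LinearMap.range (F : H →ₗ[ℂ] H) ⊓ LinearMap.range ((1 - E : H →L[ℂ] H) : H →ₗ[ℂ] H) = ⊥ := by
    rw [eq_bot_iff]
    rintro x ⟨⟨a, ha⟩, ⟨b, hb⟩⟩
    have hFx : F x = x := by rw [← ha]; exact hFap a
    have hEx : E x = 0 := by
      rw [← hb]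
      simp only [ContinuousLinearMap.coe_coe, ContinuousLinearMap.sub_apply, ContinuousLinearMap.one_apply, map_sub]
      rw [hEap]
      simp
    have := key x
    rw [hFx, hEx] at this
    simp only [norm_zero, mul_zero] at this
    have hx0 : ‖x‖ = 0 := le_antisymm (by nlinarith) (norm_nonneg x)
    simpa [Submodule.mem_bot] using norm_eq_zero.mp hx0
  refine ⟨part1, ?_⟩
  classical
  set δ : ℝ := (c - r) / (2 * c) with hδdef
  have hδ : 0 < δ := div_pos (by linarith) (by linarith)
  have key' : ∀ η : H, δ * ‖F η‖ ≤ ‖E (F η)‖ := by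
    intro η
    rw [hδdef, div_mul_eq_mul_div, div_le_iff₀ (by linarith : (0:ℝ) < 2 * c)]
    calc (c - r) * ‖F η‖ ≤ 2 * c * ‖E (F η)‖ := key η
      _ = ‖E (F η)‖ * (2 * c) := by ring
  set B : H →L[ℂ] H := F * E * F with hB
  set G : H →L[ℂ] H := B + (1 - F) with hG
  have hBsa : IsSelfAdjoint B := by
    simp only [hB, IsSelfAdjoint, star_mul, hE2.star_eq, hF2.star_eq, mul_assoc]
  have h1Fsa : IsSelfAdjoint ((1 : H →L[ℂ] H) - F) := (IsSelfAdjoint.one _).sub hF2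
  have hGsa : IsSelfAdjoint G := hBsa.add h1Fsa
  have h1F : IsIdempotentElem ((1 : H →L[ℂ] H) - F) := hF1.one_sub
  set μ : ℝ := min (δ ^ 2) 1 with hμdef
  have hμ : 0 < μ := lt_min (by positivity) one_pos
  have hGlb : ∀ ξ : H, μ * ‖ξ‖ ^ 2 ≤ RCLike.re ⟪G ξ, ξ⟫_ℂ := by
    intro ξ
    have e1 : ⟪(1 - F) ξ, ξ⟫_ℂ = ((‖(1 - F) ξ‖ : ℂ)) ^ 2 := proj_inner _ h1F h1Fsa ξ
    have e2 : ⟪B ξ, ξ⟫_ℂ = ((‖E (F ξ)‖ : ℂ)) ^ 2 := by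
      have hBapp : B ξ = F (E (F ξ)) := by
        simp [hB, ContinuousLinearMap.mul_apply]
      rw [hBapp]
      have h2 := ContinuousLinearMap.adjoint_inner_left F ξ (E (F ξ))
      rw [hF2.adjoint_eq] at h2
      rw [h2]
      exact proj_inner E hE1 hE2 (F ξ)
    have eF : ⟪F ξ, ξ⟫_ℂ = ((‖F ξ‖ : ℂ)) ^ 2 := proj_inner F hF1 hF2 ξ
    have e3 : ‖ξ‖ ^ 2 = ‖F ξ‖ ^ 2 + ‖(1 - F) ξ‖ ^ 2 := by
      have hsplit : (F ξ) + ((1 - F) ξ) = ξ := by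
        simp [ContinuousLinearMap.sub_apply]
      have h4 : RCLike.re ⟪ξ, ξ⟫_ℂ = ‖ξ‖ ^ 2 := by
        rw [inner_self_eq_norm_sq_to_K]
        norm_cast
      calc ‖ξ‖ ^ 2 = RCLike.re ⟪ξ, ξ⟫_ℂ := h4.symm
        _ = RCLike.re ⟪F ξ + (1 - F) ξ, ξ⟫_ℂ := by rw [hsplit]
        _ = RCLike.re ⟪F ξ, ξ⟫_ℂ + RCLike.re ⟪(1 - F) ξ, ξ⟫_ℂ := by
            rw [inner_add_left, map_add]
        _ = ‖F ξ‖ ^ 2 + ‖(1 - F) ξ‖ ^ 2 := by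
            rw [eF, e1]; norm_cast
    have h5 : RCLike.re ⟪G ξ, ξ⟫_ℂ = ‖E (F ξ)‖ ^ 2 + ‖(1 - F) ξ‖ ^ 2 := by
      have hGapp : G ξ = B ξ + (1 - F) ξ := by
        simp [hG, ContinuousLinearMap.add_apply]
      rw [hGapp, inner_add_left, map_add, e1, e2]
      norm_cast
    have h6 : δ ^ 2 * ‖F ξ‖ ^ 2 ≤ ‖E (F ξ)‖ ^ 2 := by
      nlinarith [key' ξ, norm_nonneg (F ξ), norm_nonneg (E (F ξ)), hδ.le,
        mul_nonneg hδ.le (norm_nonneg (F ξ))]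
    have hm1 : μ ≤ δ ^ 2 := min_le_left _ _
    have hm2 : μ ≤ 1 := min_le_right _ _
    rw [h5]
    nlinarith [sq_nonneg ‖F ξ‖, sq_nonneg ‖(1 - F) ξ‖]
  -- spectrum of G is contained in [μ, ∞)
  have hspec : spectrum ℝ G ⊆ Set.Ici μ := by
    intro x hx
    by_contra hlt
    rw [Set.mem_Ici, not_le] at hlt
    have hun : IsUnit (G - algebraMap ℝ (H →L[ℂ] H) x) := by
      refine ContinuousLinearMap.isUnit_of_forall_le_norm_inner_map _
        (c := ⟨μ - x, by linarith⟩) (by exact_mod_cast (by linarith : (0:ℝ) < μ - x)) ?_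
      intro ξ
      have happ : (G - algebraMap ℝ (H →L[ℂ] H) x) ξ = G ξ - x • ξ := by
        simp [Algebra.algebraMap_eq_smul_one, ContinuousLinearMap.sub_apply,
          ContinuousLinearMap.smul_apply, ContinuousLinearMap.one_apply]
      have hre : RCLike.re ⟪(G - algebraMap ℝ (H →L[ℂ] H) x) ξ, ξ⟫_ℂ
          = RCLike.re ⟪G ξ, ξ⟫_ℂ - x * ‖ξ‖ ^ 2 := by
        have hsm : ⟪x • ξ, ξ⟫_ℂ = ((x * ‖ξ‖ ^ 2 : ℝ) : ℂ) := by
          rw [RCLike.real_smul_eq_coe_smul (K := ℂ), inner_smul_left,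
            inner_self_eq_norm_sq_to_K]
          rw [RCLike.conj_ofReal]
          norm_cast
        rw [happ, inner_sub_left, map_sub, hsm]
        congr 1
      have hge : ‖ξ‖ ^ 2 * (μ - x) ≤ RCLike.re ⟪(G - algebraMap ℝ (H →L[ℂ] H) x) ξ, ξ⟫_ℂ := by
        rw [hre]
        have := hGlb ξ
        nlinarith [sq_nonneg ‖ξ‖]
      calc ‖ξ‖ ^ 2 * ((⟨μ - x, by linarith⟩ : NNReal) : ℝ)
          ≤ RCLike.re ⟪(G - algebraMap ℝ (H →L[ℂ] H) x) ξ, ξ⟫_ℂ := hge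
        _ ≤ ‖⟪(G - algebraMap ℝ (H →L[ℂ] H) x) ξ, ξ⟫_ℂ‖ := RCLike.re_le_norm _
    exact (spectrum.mem_iff.mp hx) (by rw [← neg_sub G (algebraMap ℝ (H →L[ℂ] H) x)]; exact hun.neg)
  have hspec' : ∀ x ∈ spectrum ℝ G, 0 < x := fun x hx => lt_of_lt_of_le hμ (hspec hx)
  set f : ℝ → ℝ := fun x => (Real.sqrt x)⁻¹ with hfdef
  have hfc : ContinuousOn f (spectrum ℝ G) := by
    intro x hx
    have hxpos := hspec' x hx
    exact (Real.continuous_sqrt.continuousWithinAt).inv₀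
      (ne_of_gt (Real.sqrt_pos.mpr hxpos))
  set W : H →L[ℂ] H := cfc f G with hW
  have hWsa : IsSelfAdjoint W := cfc_predicate f G
  -- algebraic identities
  have hFB : F * B = B := by
    rw [hB, ← mul_assoc, ← mul_assoc, hF1.eq]
  have hBF : B * F = B := by
    rw [hB, mul_assoc, hF1.eq]
  have hFG : F * G = G * F := by
    have h1 : F * G = B := by
      rw [hG, mul_add, mul_sub, mul_one, hFB, hF1.eq]
      abel
    have h2 : G * F = B := by
      rw [hG, add_mul, sub_mul, one_mul, hBF, hF1.eq]
      abel
    rw [h1, h2]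
  have hGF1 : G * (1 - F) = 1 - F := by
    have hB1F : B * (1 - F) = 0 := by
      rw [mul_sub, mul_one, hBF, sub_self]
    rw [hG, add_mul, hB1F, zero_add, h1F.eq]
  -- cfc computations
  have hWWG : W * W * G = 1 := by
    have hcf2 : ContinuousOn (fun x : ℝ => f x * f x) (spectrum ℝ G) := hfc.mul hfc
    have hcid : ContinuousOn (fun x : ℝ => x) (spectrum ℝ G) := continuousOn_id
    have step : cfc (fun x : ℝ => f x * f x * x) G = W * W * G := by
      rw [cfc_mul (fun x => f x * f x) (fun x => x) G hcf2 hcid,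
        cfc_mul f f G hfc hfc, cfc_id' ℝ G]
    have hone : cfc (fun x : ℝ => f x * f x * x) G = 1 := by
      have hcg : (spectrum ℝ G).EqOn (fun x : ℝ => f x * f x * x) (fun _ => 1) := by
        intro x hx
        have hxpos := hspec' x hx
        have hs : Real.sqrt x * Real.sqrt x = x := Real.mul_self_sqrt hxpos.le
        have hsne : Real.sqrt x ≠ 0 := ne_of_gt (Real.sqrt_pos.mpr hxpos)
        simp only [hfdef]
        field_simp
        rw [sq, hs]
      rw [cfc_congr hcg]
      exact cfc_one ℝ G
    exact step.symm.trans hone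
  have hWWF : W * W * (1 - F) = 1 - F := by
    have h : W * W * (1 - F) = W * W * (G * (1 - F)) := by rw [hGF1]
    rw [h, ← mul_assoc, hWWG, one_mul]
  have hBeq : B = G - (1 - F) := by rw [hG]; abel
  have hWWB : W * W * B = F := by
    rw [hBeq, mul_sub, hWWG, hWWF]
    abel
  have hFW : Commute F W := commute_cfc' G F f hFG
  have hC1F : Commute ((1 : H →L[ℂ] H) - F) W := (Commute.one_left W).sub_left hFW
  have hGW : Commute G W := commute_cfc' G G f (Commute.refl G)
  have hBW : Commute B W := by
    rw [hBeq]; exact hGW.sub_left hC1F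
  have hEE : ∀ X : H →L[ℂ] H, E * (E * X) = E * X := fun X => by
    rw [← mul_assoc, hE1.eq]
  have hFF : ∀ X : H →L[ℂ] H, F * (F * X) = F * X := fun X => by
    rw [← mul_assoc, hF1.eq]
  set V : H →L[ℂ] H := E * F * W with hV
  have hVadj : adjoint V = W * (F * E) := by
    rw [← ContinuousLinearMap.star_eq_adjoint]
    simp [hV, star_mul, hE2.star_eq, hF2.star_eq, hWsa.star_eq, mul_assoc]
  have hVV : adjoint V * V = F := by
    rw [hVadj, hV]
    simp only [mul_assoc]
    rw [hEE (F * W)]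
    have e2 : F * (E * (F * W)) = B * W := by
      rw [hB]; simp only [mul_assoc]
    rw [e2, hBW.eq, ← mul_assoc, hWWB]
  have hVF : V * F = V := by
    rw [hV]
    calc E * F * W * F = E * F * (W * F) := by rw [mul_assoc]
      _ = E * F * (F * W) := by rw [← hFW.eq]
      _ = E * (F * (F * W)) := by rw [mul_assoc]
      _ = E * (F * W) := by rw [hFF]
      _ = E * F * W := by rw [mul_assoc]
  have hIdem : IsIdempotentElem (V * adjoint V) := by
    show V * adjoint V * (V * adjoint V) = V * adjoint V
    calc V * adjoint V * (V * adjoint V) = V * (adjoint V * V) * adjoint V := by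
          simp only [mul_assoc]
      _ = V * F * adjoint V := by rw [hVV]
      _ = V * adjoint V := by rw [hVF]
  refine ⟨V, hVV, hIdem, ?_⟩
  rintro x ⟨y, rfl⟩
  refine ⟨(F * W * adjoint V) y, ?_⟩
  have hsplit : V * adjoint V = E * (F * W * adjoint V) := by
    rw [hV]; simp only [mul_assoc]
  show E ((F * W * adjoint V) y) = (V * adjoint V) y
  rw [hsplit]
  simp only [ContinuousLinearMap.mul_apply]
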